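/- Let d ≥ 1, p ≥ 1 real, L_f ∈ ℝ, L_u ∈ ℝ, C_u ≥ 0. There exist constants C > 0 and h₀ ∈ (0,1], depending only on p, L_f, L_u and C_u (in particular independent of N and d), such that the following pathwise moment relationship holds: for every N ≥ 1, every odd f : ℝ^d → ℝ^d with ⟨a−b, f(a)−f(b)⟩ ≤ L_f|a−b|², every u : ℝ^d × (ℝ^d)^N → ℝ^d with ⟨x−x', u(x,z)−u(x',z)⟩ ≤ L_u|x−x'|² and ⟨x, u(x,z)⟩ ≤ C_u(1 + |x|² + (1/N)∑_j|z_j|²), every h ∈ (0,h₀), and all X, Y ∈ (ℝ^d)^N with Y a split-step stage for X, one has for every i ∈ {1,…,N}: |Y_i|^{2p} ≤ C( (1/N)∑_{j=1}^N |X_i − X_j|^{2p} + ((1/N)∑_{j=1}^N (1 + |X_j|²))^p + 1 ). -/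

import Mathlib

open scoped RealInnerProductSpace BigOperators

set_option maxHeartbeats 2000000 in
/-- Moment relationship for the implicit split-step stage.
There are `C > 0` and `h₀ ∈ (0,1]`, depending only on `p, L_f, L_u, C_u` (in particular
independent of `N` and `d`), such that for any split-step stage `Y` of `X`,
`‖Y_i‖^{2p} ≤ C((1/N)∑_j ‖X_i − X_j‖^{2p} + ((1/N)∑_j (1 + ‖X_j‖²))^p + 1)`.
Real exponents denote real (rpow) powers. -/
theorem split_step_stage_moment_relationship
    (p : ℝ) (hp : 1 ≤ p) (Lf Lu Cu : ℝ) (hCu : 0 ≤ Cu) :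
    ∃ C h₀ : ℝ, 0 < C ∧ 0 < h₀ ∧ h₀ ≤ 1 ∧
      ∀ d N : ℕ, 1 ≤ d → 1 ≤ N →
      ∀ f : EuclideanSpace ℝ (Fin d) → EuclideanSpace ℝ (Fin d),
        (∀ x, f (-x) = - f x) →
        (∀ a b : EuclideanSpace ℝ (Fin d), ⟪a - b, f a - f b⟫ ≤ Lf * ‖a - b‖ ^ 2) →
      ∀ u : EuclideanSpace ℝ (Fin d) → (Fin N → EuclideanSpace ℝ (Fin d)) →
          EuclideanSpace ℝ (Fin d),
        (∀ (x x' : EuclideanSpace ℝ (Fin d)) (z : Fin N → EuclideanSpace ℝ (Fin d)),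
          ⟪x - x', u x z - u x' z⟫ ≤ Lu * ‖x - x'‖ ^ 2) →
        (∀ (x : EuclideanSpace ℝ (Fin d)) (z : Fin N → EuclideanSpace ℝ (Fin d)),
          ⟪x, u x z⟫ ≤ Cu * (1 + ‖x‖ ^ 2 + (N : ℝ)⁻¹ * ∑ j, ‖z j‖ ^ 2)) →
      ∀ h : ℝ, 0 < h → h < h₀ →
      ∀ X Y : Fin N → EuclideanSpace ℝ (Fin d),
        (∀ i, Y i = X i + h • ((N : ℝ)⁻¹ • ∑ j, f (Y i - Y j) + u (Y i) Y)) →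
        ∀ i, ‖Y i‖ ^ (2 * p) ≤
          C * ((N : ℝ)⁻¹ * ∑ j, ‖X i - X j‖ ^ (2 * p)
            + ((N : ℝ)⁻¹ * ∑ j, (1 + ‖X j‖ ^ 2)) ^ p + 1) := by
  classical
  have habsf := abs_nonneg Lf
  have habsu := abs_nonneg Lu
  set L : ℝ := |Lf| + |Lu| + Cu + 1 with hLdef
  have hL1 : (1:ℝ) ≤ L := by simp only [hLdef]; linarith
  have hLpos : (0:ℝ) < L := by linarith
  refine ⟨(24:ℝ) ^ p, min 1 (1/(8*L)), Real.rpow_pos_of_pos (by norm_num) p,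
    lt_min one_pos (by positivity), min_le_left _ _, ?_⟩
  intro d N hd hN f hodd hflip u hulip hugrow h hh hh0 X Y hY i
  have hN0 : (0:ℝ) < N := by exact_mod_cast hN
  have hNinv : (0:ℝ) ≤ (N:ℝ)⁻¹ := by positivity
  have hhL : h * L ≤ 1/8 := by
    have h1 : h < 1/(8*L) := lt_of_lt_of_le hh0 (min_le_right _ _)
    have h2 : h * (8*L) < 1 := by
      rw [← lt_div_iff₀ (by positivity)]
      simpa [one_div] using h1
    nlinarith
  have hfle : h * |Lf| ≤ 1/8 :=
    le_trans (mul_le_mul_of_nonneg_left (by simp only [hLdef]; linarith) hh.le) hhL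
  have hule : h * (|Lf| + |Lu|) ≤ 1/8 :=
    le_trans (mul_le_mul_of_nonneg_left (by simp only [hLdef]; linarith) hh.le) hhL
  have hCule : h * Cu ≤ 1/8 :=
    le_trans (mul_le_mul_of_nonneg_left (by simp only [hLdef]; linarith) hh.le) hhL
  -- f 0 = 0
  have f0 : f 0 = 0 := by
    have h1 := hodd 0
    rw [neg_zero] at h1
    have h2 : (2:ℝ) • f 0 = 0 := by
      rw [two_smul]; nth_rewrite 1 [h1]; abel
    simpa using (smul_eq_zero.mp h2).resolve_left (by norm_num)
  have hfself : ∀ x : EuclideanSpace ℝ (Fin d), ⟪x, f x⟫ ≤ Lf * ‖x‖ ^ 2 := by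
    intro x
    have := hflip x 0
    simpa [f0] using this
  -- Lemma A: pairwise contraction
  have hA : ∀ i j, ‖Y i - Y j‖ ≤ 2 * ‖X i - X j‖ := by
    intro i j
    have hdiff : Y i - Y j = X i - X j +
        h • ((N:ℝ)⁻¹ • ∑ k, (f (Y i - Y k) - f (Y j - Y k)) + (u (Y i) Y - u (Y j) Y)) := by
      conv_lhs => rw [hY i, hY j]
      rw [Finset.sum_sub_distrib]
      module
    have hexp : ‖Y i - Y j‖ ^ 2 = ⟪Y i - Y j, X i - X j⟫ +
        h * ((N:ℝ)⁻¹ * ∑ k, ⟪Y i - Y j, f (Y i - Y k) - f (Y j - Y k)⟫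
          + ⟪Y i - Y j, u (Y i) Y - u (Y j) Y⟫) := by
      conv_lhs => rw [← real_inner_self_eq_norm_sq]
      nth_rewrite 2 [hdiff]
      simp only [inner_add_right, real_inner_smul_right, inner_sum]
    have hterm : ∀ k, ⟪Y i - Y j, f (Y i - Y k) - f (Y j - Y k)⟫ ≤ |Lf| * ‖Y i - Y j‖ ^ 2 := by
      intro k
      have h1 := hflip (Y i - Y k) (Y j - Y k)
      rw [sub_sub_sub_cancel_right] at h1
      exact h1.trans (mul_le_mul_of_nonneg_right (le_abs_self Lf) (sq_nonneg _))
    have hsum : (N:ℝ)⁻¹ * ∑ k, ⟪Y i - Y j, f (Y i - Y k) - f (Y j - Y k)⟫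
        ≤ |Lf| * ‖Y i - Y j‖ ^ 2 := by
      have h1 : ∑ k, ⟪Y i - Y j, f (Y i - Y k) - f (Y j - Y k)⟫
          ≤ (N:ℝ) * (|Lf| * ‖Y i - Y j‖ ^ 2) := by
        calc ∑ k, ⟪Y i - Y j, f (Y i - Y k) - f (Y j - Y k)⟫
            ≤ ∑ _k : Fin N, |Lf| * ‖Y i - Y j‖ ^ 2 :=
              Finset.sum_le_sum fun k _ => hterm k
          _ = (N:ℝ) * (|Lf| * ‖Y i - Y j‖ ^ 2) := by
              simp [Finset.sum_const, Finset.card_univ, mul_assoc]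
      have h2 := mul_le_mul_of_nonneg_left h1 hNinv
      rwa [show (N:ℝ)⁻¹ * ((N:ℝ) * (|Lf| * ‖Y i - Y j‖ ^ 2)) = |Lf| * ‖Y i - Y j‖ ^ 2 by
        field_simp] at h2
    have hu : ⟪Y i - Y j, u (Y i) Y - u (Y j) Y⟫ ≤ |Lu| * ‖Y i - Y j‖ ^ 2 :=
      (hulip (Y i) (Y j) Y).trans (mul_le_mul_of_nonneg_right (le_abs_self Lu) (sq_nonneg _))
    have hiXX : ⟪Y i - Y j, X i - X j⟫ ≤ ‖Y i - Y j‖ * ‖X i - X j‖ := real_inner_le_norm _ _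
    have hv2 : ‖Y i - Y j‖ ^ 2 ≤ ‖Y i - Y j‖ * ‖X i - X j‖ + (1/2) * ‖Y i - Y j‖ ^ 2 := by
      have hb : h * ((N:ℝ)⁻¹ * ∑ k, ⟪Y i - Y j, f (Y i - Y k) - f (Y j - Y k)⟫
          + ⟪Y i - Y j, u (Y i) Y - u (Y j) Y⟫) ≤ (1/2) * ‖Y i - Y j‖ ^ 2 := by
        have h1 := mul_le_mul_of_nonneg_left (add_le_add hsum hu) hh.le
        have h2 : h * (|Lf| * ‖Y i - Y j‖ ^ 2 + |Lu| * ‖Y i - Y j‖ ^ 2)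
            ≤ (1/2) * ‖Y i - Y j‖ ^ 2 := by
          nlinarith [mul_le_mul_of_nonneg_right hule (sq_nonneg ‖Y i - Y j‖)]
        linarith
      linarith [hexp, hiXX, hb]
    rcases eq_or_ne ‖Y i - Y j‖ 0 with h0 | h0
    · rw [h0]; positivity
    · have hvpos : 0 < ‖Y i - Y j‖ := (norm_nonneg _).lt_of_ne' h0
      nlinarith [norm_nonneg (X i - X j)]
  have hA4 : ∀ i j, ‖Y i - Y j‖ ^ 2 ≤ 4 * ‖X i - X j‖ ^ 2 := by
    intro i j
    nlinarith [hA i j, norm_nonneg (Y i - Y j), norm_nonneg (X i - X j)]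
  -- self expansion
  have hself : ∀ i, ‖Y i‖ ^ 2 = ⟪Y i, X i⟫ +
      h * ((N:ℝ)⁻¹ * ∑ k, ⟪Y i, f (Y i - Y k)⟫ + ⟪Y i, u (Y i) Y⟫) := by
    intro i
    conv_lhs => rw [← real_inner_self_eq_norm_sq]
    nth_rewrite 2 [hY i]
    simp only [inner_add_right, real_inner_smul_right, inner_sum]
  -- Lemma B : sum moment bound
  have hS : ∑ j, ‖Y j‖ ^ 2 ≤ 6 * ∑ j, (1 + ‖X j‖ ^ 2) := by
    have hSnn : (0:ℝ) ≤ ∑ j, ‖Y j‖ ^ 2 := Finset.sum_nonneg fun j _ => sq_nonneg _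
    have hRnn : (0:ℝ) ≤ ∑ j, ‖X j‖ ^ 2 := Finset.sum_nonneg fun j _ => sq_nonneg _
    -- symmetrization of the interaction term
    have hsym : (∑ i, ∑ k, ⟪Y i, f (Y i - Y k)⟫) + (∑ i, ∑ k, ⟪Y i, f (Y i - Y k)⟫)
        = ∑ i, ∑ k, ⟪Y i - Y k, f (Y i - Y k)⟫ := by
      nth_rewrite 2 [Finset.sum_comm]
      rw [← Finset.sum_add_distrib]
      refine Finset.sum_congr rfl fun i _ => ?_
      rw [← Finset.sum_add_distrib]
      refine Finset.sum_congr rfl fun k _ => ?_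
      rw [show Y k - Y i = -(Y i - Y k) by abel, hodd, inner_neg_right, inner_sub_left]
      ring
    have htermS : ∀ i k, ⟪Y i - Y k, f (Y i - Y k)⟫ ≤ 4 * |Lf| * ‖X i - X k‖ ^ 2 := by
      intro i k
      refine (hfself _).trans ?_
      have h1 := mul_le_mul_of_nonneg_left (hA4 i k) habsf
      have h2 := mul_le_mul_of_nonneg_right (le_abs_self Lf) (sq_nonneg ‖Y i - Y k‖)
      nlinarith
    have hT : ∑ i, ∑ k, ⟪Y i, f (Y i - Y k)⟫ ≤ 2 * |Lf| * ∑ i, ∑ k, ‖X i - X k‖ ^ 2 := by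
      have h1 : (∑ i, ∑ k, ⟪Y i, f (Y i - Y k)⟫) + (∑ i, ∑ k, ⟪Y i, f (Y i - Y k)⟫)
          ≤ ∑ i, ∑ k, (4 * |Lf| * ‖X i - X k‖ ^ 2) := by
        rw [hsym]
        exact Finset.sum_le_sum fun i _ => Finset.sum_le_sum fun k _ => htermS i k
      have h2 : ∑ i, ∑ k, (4 * |Lf| * ‖X i - X k‖ ^ 2)
          = 4 * |Lf| * ∑ i, ∑ k, ‖X i - X k‖ ^ 2 := by
        simp [Finset.mul_sum]
      linarith
    have hXX : ∑ i, ∑ k, ‖X i - X k‖ ^ 2 ≤ 4 * N * ∑ j, ‖X j‖ ^ 2 := by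
      have h1 : ∀ i k : Fin N, ‖X i - X k‖ ^ 2 ≤ 2 * ‖X i‖ ^ 2 + 2 * ‖X k‖ ^ 2 := by
        intro i k
        have := norm_sub_le (X i) (X k)
        nlinarith [norm_nonneg (X i - X k), norm_nonneg (X i), norm_nonneg (X k),
          sq_nonneg (‖X i‖ - ‖X k‖)]
      calc ∑ i, ∑ k, ‖X i - X k‖ ^ 2
          ≤ ∑ i : Fin N, ∑ k : Fin N, (2 * ‖X i‖ ^ 2 + 2 * ‖X k‖ ^ 2) :=
            Finset.sum_le_sum fun i _ => Finset.sum_le_sum fun k _ => h1 i k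
        _ = 4 * N * ∑ j, ‖X j‖ ^ 2 := by
            simp [Finset.sum_add_distrib, Finset.sum_const, Finset.card_univ,
              ← Finset.mul_sum, Finset.sum_mul]
            ring
    have hU : ∑ i, ⟪Y i, u (Y i) Y⟫ ≤ Cu * (N + 2 * ∑ j, ‖Y j‖ ^ 2) := by
      calc ∑ i, ⟪Y i, u (Y i) Y⟫
          ≤ ∑ i : Fin N, (Cu * (1 + ‖Y i‖ ^ 2 + (N:ℝ)⁻¹ * ∑ j, ‖Y j‖ ^ 2)) :=
            Finset.sum_le_sum fun i _ => hugrow (Y i) Y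
        _ = Cu * (N + (∑ j, ‖Y j‖ ^ 2) + N * ((N:ℝ)⁻¹ * ∑ j, ‖Y j‖ ^ 2)) := by
            rw [← Finset.mul_sum]
            congr 1
            simp [Finset.sum_add_distrib, Finset.sum_const, Finset.card_univ]
        _ = Cu * (N + 2 * ∑ j, ‖Y j‖ ^ 2) := by
            congr 1
            field_simp
            ring
    have hYX : ∑ i, ⟪Y i, X i⟫ ≤ (1/2) * ∑ j, ‖Y j‖ ^ 2 + (1/2) * ∑ j, ‖X j‖ ^ 2 := by
      calc ∑ i, ⟪Y i, X i⟫
          ≤ ∑ i : Fin N, ((1/2) * ‖Y i‖ ^ 2 + (1/2) * ‖X i‖ ^ 2) := by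
            refine Finset.sum_le_sum fun i _ => ?_
            nlinarith [real_inner_le_norm (Y i) (X i), sq_nonneg (‖Y i‖ - ‖X i‖)]
        _ = (1/2) * ∑ j, ‖Y j‖ ^ 2 + (1/2) * ∑ j, ‖X j‖ ^ 2 := by
            rw [Finset.sum_add_distrib, ← Finset.mul_sum, ← Finset.mul_sum]
    have hSeq : ∑ j, ‖Y j‖ ^ 2 = ∑ i, ⟪Y i, X i⟫ +
        h * ((N:ℝ)⁻¹ * (∑ i, ∑ k, ⟪Y i, f (Y i - Y k)⟫) + ∑ i, ⟪Y i, u (Y i) Y⟫) := by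
      rw [Finset.sum_congr rfl fun i _ => hself i, Finset.sum_add_distrib, ← Finset.mul_sum,
        Finset.sum_add_distrib, ← Finset.mul_sum]
    -- bound the f contribution
    have hTb : h * ((N:ℝ)⁻¹ * (∑ i, ∑ k, ⟪Y i, f (Y i - Y k)⟫)) ≤ ∑ j, ‖X j‖ ^ 2 := by
      have t1 : ∑ i, ∑ k, ⟪Y i, f (Y i - Y k)⟫ ≤ 8 * |Lf| * N * ∑ j, ‖X j‖ ^ 2 := by
        have := mul_le_mul_of_nonneg_left hXX (by positivity : (0:ℝ) ≤ 2 * |Lf|)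
        nlinarith
      have t2 : (N:ℝ)⁻¹ * (∑ i, ∑ k, ⟪Y i, f (Y i - Y k)⟫) ≤ 8 * |Lf| * ∑ j, ‖X j‖ ^ 2 := by
        have h2 := mul_le_mul_of_nonneg_left t1 hNinv
        rwa [show (N:ℝ)⁻¹ * (8 * |Lf| * N * ∑ j, ‖X j‖ ^ 2) = 8 * |Lf| * ∑ j, ‖X j‖ ^ 2 by
          field_simp] at h2
      have h3 := mul_le_mul_of_nonneg_left t2 hh.le
      have h4 : h * (8 * |Lf| * ∑ j, ‖X j‖ ^ 2) ≤ ∑ j, ‖X j‖ ^ 2 := by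
        nlinarith [mul_le_mul_of_nonneg_right hfle hRnn]
      linarith
    have hUb : h * ∑ i, ⟪Y i, u (Y i) Y⟫ ≤ N + (1/4) * ∑ j, ‖Y j‖ ^ 2 := by
      have h1 := mul_le_mul_of_nonneg_left hU hh.le
      have h2 := mul_le_mul_of_nonneg_right hCule
        (by positivity : (0:ℝ) ≤ (N:ℝ) + 2 * ∑ j, ‖Y j‖ ^ 2)
      nlinarith
    have hfin : ∑ j, (1 + ‖X j‖ ^ 2) = (N:ℝ) + ∑ j, ‖X j‖ ^ 2 := by
      simp [Finset.sum_add_distrib, Finset.sum_const, Finset.card_univ]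
    rw [hfin]
    have hmul : h * ((N:ℝ)⁻¹ * (∑ i, ∑ k, ⟪Y i, f (Y i - Y k)⟫) + ∑ i, ⟪Y i, u (Y i) Y⟫)
        = h * ((N:ℝ)⁻¹ * (∑ i, ∑ k, ⟪Y i, f (Y i - Y k)⟫)) + h * ∑ i, ⟪Y i, u (Y i) Y⟫ := by
      ring
    rw [hmul] at hSeq
    linarith
  -- per-index second moment bound
  have hBnn : (0:ℝ) ≤ (N:ℝ)⁻¹ * ∑ j, (1 + ‖X j‖ ^ 2) :=
    mul_nonneg hNinv (Finset.sum_nonneg fun j _ => by positivity)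
  have hAnn : (0:ℝ) ≤ (N:ℝ)⁻¹ * ∑ j, ‖X i - X j‖ ^ 2 := by positivity
  have hC2 : ‖Y i‖ ^ 2 ≤ 8 * ((N:ℝ)⁻¹ * ∑ j, ‖X i - X j‖ ^ 2)
      + 12 * ((N:ℝ)⁻¹ * ∑ j, (1 + ‖X j‖ ^ 2)) := by
    have e1 : ‖Y i‖ ^ 2 = (N:ℝ)⁻¹ * ∑ _j : Fin N, ‖Y i‖ ^ 2 := by
      rw [Finset.sum_const, Finset.card_univ, Fintype.card_fin, nsmul_eq_mul]
      field_simp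
    have e2 : ∀ j, ‖Y i‖ ^ 2 ≤ 8 * ‖X i - X j‖ ^ 2 + 2 * ‖Y j‖ ^ 2 := by
      intro j
      have h1 : ‖Y i‖ ≤ ‖Y i - Y j‖ + ‖Y j‖ := by
        have := norm_add_le (Y i - Y j) (Y j)
        simpa using this
      nlinarith [hA4 i j, norm_nonneg (Y i - Y j), norm_nonneg (Y j), norm_nonneg (Y i),
        sq_nonneg (‖Y i - Y j‖ - ‖Y j‖)]
    calc ‖Y i‖ ^ 2 = (N:ℝ)⁻¹ * ∑ _j : Fin N, ‖Y i‖ ^ 2 := e1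
      _ ≤ (N:ℝ)⁻¹ * ∑ j, (8 * ‖X i - X j‖ ^ 2 + 2 * ‖Y j‖ ^ 2) :=
          mul_le_mul_of_nonneg_left (Finset.sum_le_sum fun j _ => e2 j) hNinv
      _ = 8 * ((N:ℝ)⁻¹ * ∑ j, ‖X i - X j‖ ^ 2) + 2 * ((N:ℝ)⁻¹ * ∑ j, ‖Y j‖ ^ 2) := by
          rw [Finset.sum_add_distrib, ← Finset.mul_sum, ← Finset.mul_sum]
          ring
      _ ≤ 8 * ((N:ℝ)⁻¹ * ∑ j, ‖X i - X j‖ ^ 2)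
          + 2 * ((N:ℝ)⁻¹ * (6 * ∑ j, (1 + ‖X j‖ ^ 2))) := by
          have := mul_le_mul_of_nonneg_left hS hNinv
          linarith
      _ = 8 * ((N:ℝ)⁻¹ * ∑ j, ‖X i - X j‖ ^ 2)
          + 12 * ((N:ℝ)⁻¹ * ∑ j, (1 + ‖X j‖ ^ 2)) := by ring
  -- rpow conclusion
  have hpow : ∀ x : EuclideanSpace ℝ (Fin d), (‖x‖ ^ 2 : ℝ) ^ p = ‖x‖ ^ (2 * p) := by
    intro x
    rw [Real.rpow_mul (norm_nonneg x), Real.rpow_two]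
  have hJ : ((N:ℝ)⁻¹ * ∑ j, ‖X i - X j‖ ^ 2) ^ p
      ≤ (N:ℝ)⁻¹ * ∑ j, ‖X i - X j‖ ^ (2 * p) := by
    have hw : ∑ _j : Fin N, (N:ℝ)⁻¹ = 1 := by
      rw [Finset.sum_const, Finset.card_univ, Fintype.card_fin, nsmul_eq_mul]
      field_simp
    have h1 := Real.rpow_arith_mean_le_arith_mean_rpow Finset.univ (fun _ : Fin N => (N:ℝ)⁻¹)
      (fun j => ‖X i - X j‖ ^ 2) (fun _ _ => hNinv) hw (fun j _ => sq_nonneg _) hp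
    calc ((N:ℝ)⁻¹ * ∑ j, ‖X i - X j‖ ^ 2) ^ p
        = (∑ j, (N:ℝ)⁻¹ * ‖X i - X j‖ ^ 2) ^ p := by rw [Finset.mul_sum]
      _ ≤ ∑ j, (N:ℝ)⁻¹ * (‖X i - X j‖ ^ 2) ^ p := h1
      _ = (N:ℝ)⁻¹ * ∑ j, ‖X i - X j‖ ^ (2 * p) := by
          rw [Finset.mul_sum]
          exact Finset.sum_congr rfl fun j _ => by rw [hpow]
  have ht1nn : (0:ℝ) ≤ (N:ℝ)⁻¹ * ∑ j, ‖X i - X j‖ ^ (2 * p) := by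
    apply mul_nonneg hNinv
    exact Finset.sum_nonneg fun j _ => Real.rpow_nonneg (norm_nonneg _) _
  set A := (N:ℝ)⁻¹ * ∑ j, ‖X i - X j‖ ^ 2 with hAdef
  set B := (N:ℝ)⁻¹ * ∑ j, (1 + ‖X j‖ ^ 2) with hBdef
  have h2var : (8 * A + 12 * B) ^ p ≤ (1/2) * (16 * A) ^ p + (1/2) * (24 * B) ^ p := by
    have h1 := Real.rpow_arith_mean_le_arith_mean_rpow Finset.univ ![(1:ℝ)/2, 1/2]
      ![16 * A, 24 * B] (by intro k _; fin_cases k <;> norm_num)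
      (by simp [Fin.sum_univ_two]; norm_num)
      (by intro k _; fin_cases k <;> [exact mul_nonneg (by norm_num) hAnn; exact mul_nonneg (by norm_num) hBnn]) hp
    simp only [Fin.sum_univ_two, Matrix.cons_val_zero, Matrix.cons_val_one, Matrix.head_cons]
      at h1
    have h2 : (1:ℝ)/2 * (16 * A) + 1/2 * (24 * B) = 8 * A + 12 * B := by ring
    rwa [h2] at h1
  have hApnn : (0:ℝ) ≤ A ^ p := Real.rpow_nonneg hAnn _
  have hBpnn : (0:ℝ) ≤ B ^ p := Real.rpow_nonneg hBnn _
  have h16 : ((16:ℝ)) ^ p ≤ (24:ℝ) ^ p :=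
    Real.rpow_le_rpow (by norm_num) (by norm_num) (by linarith)
  have h24nn : (0:ℝ) ≤ (24:ℝ) ^ p := Real.rpow_nonneg (by norm_num) _
  calc ‖Y i‖ ^ (2 * p) = (‖Y i‖ ^ 2) ^ p := (hpow (Y i)).symm
    _ ≤ (8 * A + 12 * B) ^ p := Real.rpow_le_rpow (sq_nonneg _) hC2 (by linarith)
    _ ≤ (1/2) * (16 * A) ^ p + (1/2) * (24 * B) ^ p := h2var
    _ = (1/2) * ((16:ℝ) ^ p * A ^ p) + (1/2) * ((24:ℝ) ^ p * B ^ p) := by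
        rw [Real.mul_rpow (by norm_num) hAnn, Real.mul_rpow (by norm_num) hBnn]
    _ ≤ (24:ℝ) ^ p * (((N:ℝ)⁻¹ * ∑ j, ‖X i - X j‖ ^ (2 * p)) + B ^ p + 1) := by
        have k1 : (16:ℝ) ^ p * A ^ p ≤ (24:ℝ) ^ p * ((N:ℝ)⁻¹ * ∑ j, ‖X i - X j‖ ^ (2 * p)) :=
          mul_le_mul h16 hJ hApnn h24nn
        nlinarith [mul_nonneg h24nn ht1nn, mul_nonneg h24nn hBpnn]
    _ = (24:ℝ) ^ p * (((N:ℝ)⁻¹ * ∑ j, ‖X i - X j‖ ^ (2 * p))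
        + ((N:ℝ)⁻¹ * ∑ j, (1 + ‖X j‖ ^ 2)) ^ p + 1) := by rw [hBdef]
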